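/- Let ρ ∈ ℕ, δ₁, …, δ_ρ ∈ (−1, ∞), κ₁, …, κ_ρ ∈ ℤ₊, let 0 < c < 1/2, and let α, β ∈ (−1, ∞) with α + β > −1. Then for all complex t, x with |t| < c and |x| < 1/(4c) − 1/2, one has (1−t)^{−α−β−1} · ᵨ₊₂F_{ρ+1}((α+β+1)/2, (α+β+2)/2, δ₁+1, …, δ_ρ+1; α+1, κ₁+δ₁+1, …, κ_ρ+δ_ρ+1; −4xt/(1−t)²) = Σ_{n=0}^∞ ((α+β+1)_n / n!) 𝒫_n(x) tⁿ, where the series converges. -/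

import Mathlib

/-- Pochhammer symbol `(c)_k = c (c+1) ⋯ (c+k-1)`. -/
noncomputable def poch (c : ℂ) (k : ℕ) : ℂ := ∏ j ∈ Finset.range k, (c + j)


noncomputable def pochR (c : ℝ) (k : ℕ) : ℝ := ∏ j ∈ Finset.range k, (c + j)

lemma poch_zero (c : ℂ) : poch c 0 = 1 := by simp [poch]

lemma poch_succ (c : ℂ) (k : ℕ) : poch c (k + 1) = poch c k * (c + k) := by
  simp [poch, Finset.prod_range_succ]

lemma pochR_succ (c : ℝ) (k : ℕ) : pochR c (k + 1) = pochR c k * (c + k) := by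
  simp [pochR, Finset.prod_range_succ]

lemma poch_add (c : ℂ) (m n : ℕ) : poch c (m + n) = poch c m * poch (c + m) n := by
  unfold poch
  rw [Finset.prod_range_add]
  congr 1
  refine Finset.prod_congr rfl fun j _ => ?_
  push_cast
  ring

lemma pochR_add (c : ℝ) (m n : ℕ) : pochR c (m + n) = pochR c m * pochR (c + m) n := by
  unfold pochR
  rw [Finset.prod_range_add]
  congr 1
  refine Finset.prod_congr rfl fun j _ => ?_
  push_cast
  ring

lemma poch_ofReal (c : ℝ) (k : ℕ) : poch (c : ℂ) k = ((pochR c k : ℝ) : ℂ) := by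
  unfold poch pochR
  push_cast
  rfl

lemma pochR_pos {c : ℝ} (hc : 0 < c) (k : ℕ) : 0 < pochR c k :=
  Finset.prod_pos fun j _ => by positivity

lemma pochR_le_pochR {a b : ℝ} (ha : 0 < a) (hab : a ≤ b) (k : ℕ) :
    pochR a k ≤ pochR b k :=
  Finset.prod_le_prod (fun j _ => by positivity) (fun j _ => by linarith)

lemma poch_neg_nat (n k : ℕ) : poch (-(n : ℂ)) k = (-1) ^ k * (n.descFactorial k : ℂ) := by
  induction k with
  | zero => simp [poch]
  | succ k ih =>
    rw [poch_succ, ih, Nat.descFactorial_succ]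
    rcases le_or_gt (k + 1) n with h | h
    · rw [Nat.cast_mul, Nat.cast_sub (by omega : k ≤ n)]
      push_cast
      ring
    · have hnk : n ≤ k := by omega
      rw [Nat.sub_eq_zero_of_le hnk]
      push_cast
      rcases eq_or_lt_of_le hnk with rfl | h2
      · ring_nf
      · rw [Nat.descFactorial_eq_zero_iff_lt.mpr h2]
        simp

lemma poch_two_mul (c : ℂ) (k : ℕ) :
    poch c (2 * k) = 4 ^ k * poch (c / 2) k * poch ((c + 1) / 2) k := by
  induction k with
  | zero => simp [poch]
  | succ k ih =>
    have h : 2 * (k + 1) = 2 * k + 1 + 1 := by ring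
    rw [h, poch_succ, poch_succ, ih, poch_succ, poch_succ]
    push_cast
    ring

lemma pochR_two_mul (c : ℝ) (k : ℕ) :
    pochR c (2 * k) = 4 ^ k * pochR (c / 2) k * pochR ((c + 1) / 2) k := by
  induction k with
  | zero => simp [pochR]
  | succ k ih =>
    have h : 2 * (k + 1) = 2 * k + 1 + 1 := by ring
    rw [h, pochR_succ, pochR_succ, ih, pochR_succ, pochR_succ]
    push_cast
    ring

open Metric in
lemma hasDerivAt_one_sub_cpow (z : ℂ) {w : ℂ} (hw : ‖w‖ < 1) :
    HasDerivAt (fun u : ℂ => (1 - u) ^ z) (-z * (1 - w) ^ (z - 1)) w := by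
  have h1 : HasDerivAt (fun u : ℂ => 1 - u) (-1) w := by
    simpa using (hasDerivAt_id w).const_sub 1
  have hs : (1 - w) ∈ Complex.slitPlane := by
    refine Complex.mem_slitPlane_iff.mpr (Or.inl ?_)
    have := Complex.abs_re_le_norm w
    simp only [Complex.sub_re, Complex.one_re]
    have h2 := abs_lt.mp (lt_of_le_of_lt this hw)
    linarith [h2.2]
  have := h1.cpow_const (c := z) hs
  convert this using 1
  ring

open Metric in
lemma iteratedDeriv_one_sub_cpow (z : ℂ) (m : ℕ) :
    ∀ w ∈ ball (0 : ℂ) 1,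
      iteratedDeriv m (fun u : ℂ => (1 - u) ^ (-z)) w = poch z m * (1 - w) ^ (-z - m) := by
  induction m with
  | zero =>
    intro w _
    simp [poch, iteratedDeriv_zero]
  | succ m ih =>
    intro w hw
    rw [iteratedDeriv_succ]
    have hev : (fun u => iteratedDeriv m (fun u : ℂ => (1 - u) ^ (-z)) u) =ᶠ[nhds w]
        (fun u => poch z m * (1 - u) ^ (-z - m)) := by
      filter_upwards [isOpen_ball.mem_nhds hw] with u hu
      exact ih u hu
    rw [hev.deriv_eq]
    have hw' : ‖w‖ < 1 := mem_ball_zero_iff.mp hw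
    have hd := (hasDerivAt_one_sub_cpow (-z - m) hw').const_mul (poch z m)
    rw [hd.deriv]
    rw [poch_succ]
    have he : (-z - (m : ℂ)) - 1 = -z - ((m : ℕ) + 1 : ℕ) := by push_cast; ring
    rw [he]
    ring

open Metric in
lemma hasSum_binomial (z t : ℂ) (ht : ‖t‖ < 1) :
    HasSum (fun m : ℕ => poch z m * t ^ m / m.factorial) ((1 - t) ^ (-z)) := by
  have hdiff : DifferentiableOn ℂ (fun u : ℂ => (1 - u) ^ (-z)) (ball (0 : ℂ) 1) := by
    intro u hu
    exact (hasDerivAt_one_sub_cpow (-z) (mem_ball_zero_iff.mp hu)).differentiableAt.differentiableWithinAt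
  have H := Complex.hasSum_taylorSeries_on_ball hdiff (mem_ball_zero_iff.mpr ht)
  refine H.congr_fun fun m => ?_
  rw [iteratedDeriv_one_sub_cpow z m 0 (mem_ball_zero_iff.mpr (by simp))]
  simp only [sub_zero, smul_eq_mul, Complex.one_cpow]
  ring

lemma hasSum_binomial_real {r : ℝ} (hr0 : 0 ≤ r) (hr : r < 1) (a' : ℝ) :
    HasSum (fun m : ℕ => pochR a' m * r ^ m / m.factorial) ((1 - r) ^ (-a') : ℝ) := by
  have h := hasSum_binomial (a' : ℂ) (r : ℂ) (by rw [Complex.norm_real, Real.norm_eq_abs]; rwa [abs_of_nonneg hr0])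
  have h1 : (fun m : ℕ => poch (a' : ℂ) m * (r : ℂ) ^ m / m.factorial) =
      fun m : ℕ => ((pochR a' m * r ^ m / m.factorial : ℝ) : ℂ) := by
    funext m
    rw [poch_ofReal]
    push_cast
    ring
  rw [h1] at h
  have hval : ((1 : ℂ) - r) ^ (-(a' : ℂ)) = (((1 - r) ^ (-a') : ℝ) : ℂ) := by
    rw [Complex.ofReal_cpow (by linarith)]
    push_cast
    ring_nf
  rw [hval] at h
  exact (Complex.hasSum_ofReal).mp h
open Filter in
lemma tendsto_add_div_add (a b : ℝ) :
    Tendsto (fun k : ℕ => (a + k) / (b + k)) atTop (nhds 1) := by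
  have hb : Tendsto (fun k : ℕ => b + (k : ℝ)) atTop atTop :=
    tendsto_atTop_add_const_left _ b tendsto_natCast_atTop_atTop
  have h0 : Tendsto (fun k : ℕ => (a - b) / (b + (k : ℝ))) atTop (nhds 0) :=
    Tendsto.div_atTop tendsto_const_nhds hb
  have h1 : Tendsto (fun k : ℕ => 1 + (a - b) / (b + (k : ℝ))) atTop (nhds 1) := by
    simpa using tendsto_const_nhds.add h0
  refine h1.congr' ?_
  filter_upwards [hb.eventually_gt_atTop 0] with k hk
  field_simp
  ring

open Filter in
lemma summable_aux {a1 a2 b q : ℝ} (ha1 : 0 < a1) (ha2 : 0 < a2) (hb : 0 < b)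
    (hq0 : 0 ≤ q) (hq1 : q < 1) :
    Summable fun k : ℕ => pochR a1 k * pochR a2 k / (pochR b k * (k.factorial : ℝ)) * q ^ k := by
  set w : ℕ → ℝ := fun k => pochR a1 k * pochR a2 k / (pochR b k * (k.factorial : ℝ)) * q ^ k
    with hw
  have hwnn : ∀ k, 0 ≤ w k := by
    intro k
    rw [hw]
    have := (pochR_pos ha1 k).le
    have := (pochR_pos ha2 k).le
    have := (pochR_pos hb k).le
    positivity
  have hρ : Tendsto (fun k : ℕ => q * ((a1 + k) / (1 + k)) * ((a2 + k) / (b + k))) atTop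
      (nhds (q * 1 * 1)) :=
    (tendsto_const_nhds.mul (tendsto_add_div_add a1 1)).mul (tendsto_add_div_add a2 b)
  apply summable_of_ratio_norm_eventually_le (show (1 + q) / 2 < 1 by linarith)
  filter_upwards [hρ.eventually_le_const (show q * 1 * 1 < (1 + q) / 2 by linarith)] with k hk
  have hkb : (0:ℝ) < b + k := by positivity
  have hk1 : (0:ℝ) < 1 + k := by positivity
  have hid : w (k + 1) = w k * (q * ((a1 + k) / (1 + k)) * ((a2 + k) / (b + k))) := by
    simp only [hw, pochR_succ, Nat.factorial_succ]
    have h1 : (pochR b k : ℝ) ≠ 0 := (pochR_pos hb k).ne'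
    have h2 : ((k.factorial : ℝ)) ≠ 0 := Nat.cast_ne_zero.mpr k.factorial_ne_zero
    push_cast
    field_simp
    ring
  rw [Real.norm_eq_abs, Real.norm_eq_abs, abs_of_nonneg (hwnn _), abs_of_nonneg (hwnn _), hid]
  have h3 : 0 ≤ q * ((a1 + k) / (1 + k)) * ((a2 + k) / (b + k)) := by positivity
  have := mul_le_mul_of_nonneg_left hk (hwnn k)
  nlinarith [hwnn k]

noncomputable def AA (ρ : ℕ) (α : ℝ) (δ : Fin ρ → ℝ) (κ : Fin ρ → ℕ) (k : ℕ) : ℂ :=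
  (∏ i, poch ((δ i : ℂ) + 1) k) /
    (poch ((α : ℂ) + 1) k * ∏ i, poch ((κ i : ℂ) + (δ i : ℂ) + 1) k)

noncomputable def AAr (ρ : ℕ) (α : ℝ) (δ : Fin ρ → ℝ) (κ : Fin ρ → ℕ) (k : ℕ) : ℝ :=
  (∏ i, pochR (δ i + 1) k) /
    (pochR (α + 1) k * ∏ i, pochR ((κ i : ℝ) + δ i + 1) k)

lemma AA_cast (ρ : ℕ) (α : ℝ) (δ : Fin ρ → ℝ) (κ : Fin ρ → ℕ) (k : ℕ) :
    AA ρ α δ κ k = ((AAr ρ α δ κ k : ℝ) : ℂ) := by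
  unfold AA AAr
  rw [Complex.ofReal_div, Complex.ofReal_mul, Complex.ofReal_prod, Complex.ofReal_prod]
  congr 1
  · exact Finset.prod_congr rfl fun i _ => by rw [← poch_ofReal]; norm_cast
  · congr 1
    · rw [← poch_ofReal]; norm_cast
    · exact Finset.prod_congr rfl fun i _ => by rw [← poch_ofReal]; norm_cast

lemma AAr_pos {ρ : ℕ} {α : ℝ} {δ : Fin ρ → ℝ} (κ : Fin ρ → ℕ) (hα : -1 < α)
    (hδ : ∀ i, -1 < δ i) (k : ℕ) : 0 < AAr ρ α δ κ k := by
  unfold AAr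
  apply div_pos
  · exact Finset.prod_pos fun i _ => pochR_pos (by linarith [hδ i]) k
  · exact mul_pos (pochR_pos (by linarith) k)
      (Finset.prod_pos fun i _ => pochR_pos (by linarith [hδ i, (κ i).cast_nonneg (α := ℝ)]) k)

lemma AAr_le {ρ : ℕ} {α : ℝ} {δ : Fin ρ → ℝ} (κ : Fin ρ → ℕ) (hα : -1 < α)
    (hδ : ∀ i, -1 < δ i) (k : ℕ) : AAr ρ α δ κ k ≤ (pochR (α + 1) k)⁻¹ := by
  unfold AAr
  have hP : 0 < pochR (α + 1) k := pochR_pos (by linarith) k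
  have hD : 0 < ∏ i, pochR ((κ i : ℝ) + δ i + 1) k :=
    Finset.prod_pos fun i _ => pochR_pos (by linarith [hδ i, (κ i).cast_nonneg (α := ℝ)]) k
  rw [div_le_iff₀ (mul_pos hP hD)]
  calc (∏ i, pochR (δ i + 1) k) ≤ ∏ i, pochR ((κ i : ℝ) + δ i + 1) k := by
        refine Finset.prod_le_prod (fun i _ => (pochR_pos (by linarith [hδ i]) k).le)
          (fun i _ => pochR_le_pochR (by linarith [hδ i])
            (by linarith [(κ i).cast_nonneg (α := ℝ)]) k)
    _ = (pochR (α + 1) k)⁻¹ * (pochR (α + 1) k * ∏ i, pochR ((κ i : ℝ) + δ i + 1) k) := by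
        rw [← mul_assoc, inv_mul_cancel₀ hP.ne', one_mul]


/-- The polynomials
`𝒫_n(x;α,β,δ₁,…,δ_ρ,κ₁,…,κ_ρ)
 = ᵨ₊₂F_{ρ+1}(-n, n+α+β+1, δ₁+1,…,δ_ρ+1; α+1, κ₁+δ₁+1,…,κ_ρ+δ_ρ+1; x)`
(the series terminates since `(-n)_k = 0` for `k > n`). -/
noncomputable def calP (ρ : ℕ) (α β : ℝ) (δ : Fin ρ → ℝ) (κ : Fin ρ → ℕ)
    (n : ℕ) (x : ℂ) : ℂ :=
  ∑' k : ℕ, poch (-(n : ℂ)) k * poch ((n : ℂ) + α + β + 1) k *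
      (∏ i, poch ((δ i : ℂ) + 1) k) /
      (poch ((α : ℂ) + 1) k * ∏ i, poch ((κ i : ℂ) + (δ i : ℂ) + 1) k) *
      x ^ k / (Nat.factorial k)

theorem stmt_3 (ρ : ℕ) (hρ : 0 < ρ) (δ : Fin ρ → ℝ) (hδ : ∀ i, -1 < δ i)
    (κ : Fin ρ → ℕ) (c : ℝ) (hc1 : 0 < c) (hc2 : c < 1/2)
    (α β : ℝ) (hα : -1 < α) (hβ : -1 < β) (hαβ : -1 < α + β)
    (t x : ℂ) (ht : ‖t‖ < c) (hx : ‖x‖ < 1/(4*c) - 1/2) :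
    HasSum
      (fun n : ℕ => poch ((α : ℂ) + β + 1) n / (Nat.factorial n) *
        calP ρ α β δ κ n x * t ^ n)
      ((1 - t) ^ (-(α : ℂ) - β - 1) *
        ∑' k : ℕ, poch (((α : ℂ) + β + 1)/2) k * poch (((α : ℂ) + β + 2)/2) k *
          (∏ i, poch ((δ i : ℂ) + 1) k) /
          (poch ((α : ℂ) + 1) k * ∏ i, poch ((κ i : ℂ) + (δ i : ℂ) + 1) k) *
          (-(4*x*t/(1-t)^2)) ^ k / (Nat.factorial k)) := by
  classical
  set r : ℝ := ‖t‖ with hrdef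
  set X : ℝ := ‖x‖ with hXdef
  have hr0 : 0 ≤ r := norm_nonneg t
  have hX0 : 0 ≤ X := norm_nonneg x
  have hr1 : r < 1 := by linarith
  have h1r : 0 < 1 - r := by linarith
  have htn : ‖t‖ < 1 := by exact hr1
  have h1t : (1 : ℂ) - t ≠ 0 := by
    intro h
    have h2 : t = 1 := by linear_combination -h
    rw [h2] at htn
    simp at htn
  set γr : ℝ := α + β + 1 with hγrdef
  have hγr0 : 0 < γr := by rw [hγrdef]; linarith
  set γ : ℂ := (α : ℂ) + β + 1 with hγdef
  have hγcast : γ = ((γr : ℝ) : ℂ) := by rw [hγdef, hγrdef]; push_cast; ring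
  have hα1 : (0:ℝ) < α + 1 := by linarith
  -- the double-indexed family
  set f : ℕ × ℕ → ℂ := fun p =>
    (-1) ^ p.1 * AA ρ α δ κ p.1 * x ^ p.1 / p.1.factorial *
      (poch γ (p.2 + 2 * p.1) / p.2.factorial) * t ^ (p.2 + p.1) with hfdef
  -- norm of f
  have hnorm : ∀ p : ℕ × ℕ, ‖f p‖ =
      AAr ρ α δ κ p.1 * X ^ p.1 / p.1.factorial *
        (pochR γr (p.2 + 2 * p.1) / p.2.factorial) * r ^ (p.2 + p.1) := by
    intro p
    rw [hfdef]
    simp only [AA_cast, hγcast, poch_ofReal]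
    rw [norm_mul, norm_mul, norm_div, norm_mul, norm_mul, norm_div, norm_pow, norm_pow,
      norm_pow, norm_neg, norm_one, one_pow, one_mul]
    rw [Complex.norm_real, Complex.norm_real, Complex.norm_natCast, Complex.norm_natCast,
      Real.norm_eq_abs, Real.norm_eq_abs, abs_of_pos (AAr_pos κ hα hδ _),
      abs_of_pos (pochR_pos hγr0 _)]
  -- the quantity q and its bound
  set q : ℝ := 4 * X * r / (1 - r)^2 with hqdef
  have hq0 : 0 ≤ q := by positivity
  have hq1 : q < 1 := by
    rw [hqdef, div_lt_one (by positivity)]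
    have h4c : (0:ℝ) < 4 * c := by linarith
    have hx1 : 4 * c * X < 4 * c * (1/(4*c) - 1/2) := mul_lt_mul_of_pos_left hx h4c
    have hx2 : 4 * c * (1/(4*c) - 1/2) = 1 - 2*c := by field_simp; ring
    have hx3 : 4 * X * r ≤ 4 * X * c := by
      have : (0:ℝ) ≤ 4 * X := by linarith
      exact mul_le_mul_of_nonneg_left ht.le this
    nlinarith [sq_nonneg r]
  -- the summable majorant in k
  have hsumw : Summable (fun k : ℕ =>
      pochR (γr/2) k * pochR ((γr+1)/2) k / (pochR (α+1) k * (k.factorial : ℝ)) * q ^ k) :=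
    summable_aux (by linarith) (by linarith) hα1 hq0 hq1
  -- the majorant B of ‖f‖
  set B : ℕ × ℕ → ℝ := fun p =>
    (pochR (α+1) p.1)⁻¹ * X ^ p.1 / p.1.factorial *
      (pochR γr (p.2 + 2 * p.1) / p.2.factorial) * r ^ (p.2 + p.1) with hBdef
  have hBnn : ∀ p, 0 ≤ B p := by
    intro p
    rw [hBdef]
    have h1 := (pochR_pos hα1 p.1).le
    have h2 := (pochR_pos hγr0 (p.2 + 2*p.1)).le
    positivity
  have hfibB : ∀ k : ℕ, HasSum (fun m => B (k, m))
      ((pochR (α+1) k)⁻¹ * X ^ k / k.factorial * (pochR γr (2*k) * r^k) *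
        ((1 - r) ^ (-(γr + 2*(k:ℝ))))) := by
    intro k
    have h := (hasSum_binomial_real hr0 hr1 (γr + 2*(k:ℝ))).mul_left
      ((pochR (α+1) k)⁻¹ * X ^ k / k.factorial * (pochR γr (2*k) * r^k))
    have hfun : (fun m => B (k, m)) = fun m =>
        ((pochR (α+1) k)⁻¹ * X ^ k / k.factorial * (pochR γr (2*k) * r^k)) *
          (pochR (γr + 2*(k:ℝ)) m * r ^ m / m.factorial) := by
      funext m
      rw [hBdef]
      simp only
      rw [show m + 2*k = 2*k + m from by omega, pochR_add, pow_add]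
      push_cast
      ring
    rw [hfun]
    exact h
  have hVw : ∀ k : ℕ, (pochR (α+1) k)⁻¹ * X ^ k / k.factorial * (pochR γr (2*k) * r^k) *
      ((1 - r) ^ (-(γr + 2*(k:ℝ)))) =
      ((1 - r) ^ (-γr)) * (pochR (γr/2) k * pochR ((γr+1)/2) k /
        (pochR (α+1) k * (k.factorial : ℝ)) * q ^ k) := by
    intro k
    rw [show -(γr + 2*(k:ℝ)) = -γr + (-(((2*k : ℕ)):ℝ)) by push_cast; ring,
      Real.rpow_add h1r, Real.rpow_neg h1r.le (((2*k : ℕ) : ℝ)), Real.rpow_natCast, pow_mul,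
      pochR_two_mul, hqdef, div_pow]
    have hk1 : ((k.factorial : ℝ)) ≠ 0 := Nat.cast_ne_zero.mpr k.factorial_ne_zero
    have hk2 : pochR (α+1) k ≠ 0 := (pochR_pos hα1 k).ne'
    have hk3 : (1 - r) ≠ 0 := h1r.ne'
    have hk4 : (1 - r) ^ (-γr) ≠ 0 := (Real.rpow_pos_of_pos h1r _).ne'
    field_simp
    ring
  have hsumB : Summable B := by
    rw [summable_prod_of_nonneg hBnn]
    refine ⟨fun k => (hfibB k).summable, ?_⟩
    refine Summable.congr ((hsumw.mul_left ((1 - r) ^ (-γr))).congr fun k => (hVw k).symm)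
      fun k => (hfibB k).tsum_eq.symm
  have hsumf : Summable f := by
    apply Summable.of_norm
    apply Summable.of_nonneg_of_le (fun p => norm_nonneg _) ?_ hsumB
    intro p
    rw [hnorm p, hBdef]
    have hP2 : 0 ≤ pochR γr (p.2 + 2*p.1) / (p.2.factorial : ℝ) :=
      div_nonneg (pochR_pos hγr0 _).le (Nat.cast_nonneg _)
    refine mul_le_mul_of_nonneg_right (mul_le_mul_of_nonneg_right ?_ hP2) (pow_nonneg hr0 _)
    refine div_le_div_of_nonneg_right ?_ (by positivity)
    exact mul_le_mul_of_nonneg_right (AAr_le κ hα hδ p.1) (pow_nonneg hX0 _)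
  set S : ℂ := ∑' p, f p with hSdef
  have hfS : HasSum f S := hsumf.hasSum
  -- complex fiberwise sums
  have hfib : ∀ k : ℕ, HasSum (fun m => f (k, m))
      ((1 - t) ^ (-γ) * (poch (γ/2) k * poch (((α:ℂ) + β + 2)/2) k *
        (∏ i, poch ((δ i : ℂ) + 1) k) /
        (poch ((α : ℂ) + 1) k * ∏ i, poch ((κ i : ℂ) + (δ i : ℂ) + 1) k) *
        (-(4*x*t/(1-t)^2)) ^ k / (Nat.factorial k))) := by
    intro k
    have hb := (hasSum_binomial (γ + 2*(k:ℂ)) t htn).mul_left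
      ((-1) ^ k * AA ρ α δ κ k * x ^ k / k.factorial * poch γ (2*k) * t ^ k)
    have hfun : (fun m => f (k, m)) = fun m =>
        ((-1) ^ k * AA ρ α δ κ k * x ^ k / k.factorial * poch γ (2*k) * t ^ k) *
          (poch (γ + 2*(k:ℂ)) m * t ^ m / m.factorial) := by
      funext m
      rw [hfdef]
      simp only
      rw [show m + 2*k = 2*k + m from by omega, poch_add, pow_add]
      push_cast
      ring
    rw [hfun]
    convert hb using 1
    · rfl
    rw [show -(γ + 2*(k:ℂ)) = -γ + (-(((2*k : ℕ)) : ℂ)) by push_cast; ring,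
      Complex.cpow_add _ _ h1t, Complex.cpow_neg (1 - t) (((2*k : ℕ) : ℂ)),
      Complex.cpow_natCast, pow_mul,
      poch_two_mul, show ((γ:ℂ)+1)/2 = ((α:ℂ)+β+2)/2 by rw [hγdef]; ring]
    rw [show (-(4*x*t/(1-t)^2) : ℂ) = (-(4*x*t))/((1-t)^2) by ring, div_pow, neg_pow,
      AA, mul_pow, mul_pow]
    ring
  have hks : HasSum (fun k : ℕ => (1 - t) ^ (-γ) * (poch (γ/2) k * poch (((α:ℂ)+β+2)/2) k *
      (∏ i, poch ((δ i:ℂ)+1) k) / (poch ((α:ℂ)+1) k * ∏ i, poch ((κ i:ℂ)+(δ i:ℂ)+1) k) *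
      (-(4*x*t/(1-t)^2)) ^ k / (Nat.factorial k))) S := hfS.prod_fiberwise hfib
  have hSval : S = (1 - t) ^ (-γ) * ∑' k : ℕ, poch (γ/2) k * poch (((α:ℂ)+β+2)/2) k *
      (∏ i, poch ((δ i:ℂ)+1) k) / (poch ((α:ℂ)+1) k * ∏ i, poch ((κ i:ℂ)+(δ i:ℂ)+1) k) *
      (-(4*x*t/(1-t)^2)) ^ k / (Nat.factorial k) := by
    rw [← tsum_mul_left]
    exact hks.tsum_eq.symm
  -- sigma grouping along antidiagonals
  have hsig := (Equiv.hasSum_iff (Finset.HasAntidiagonal.sigmaAntidiagonalEquivProd (A := ℕ)) (f := f)).mpr hfS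
  have hrow : ∀ n : ℕ, HasSum
      (fun q : (Finset.HasAntidiagonal.antidiagonal n : Finset (ℕ×ℕ)) =>
        (f ∘ (Finset.HasAntidiagonal.sigmaAntidiagonalEquivProd (A := ℕ))) ⟨n, q⟩)
      (∑ p ∈ Finset.HasAntidiagonal.antidiagonal n, f p) := by
    intro n
    have h1 := hasSum_fintype (fun q : (Finset.HasAntidiagonal.antidiagonal n : Finset (ℕ×ℕ)) => f q)
    rwa [Finset.sum_coe_sort] at h1
  have hN := hsig.sigma hrow
  have hrow_eq : ∀ n : ℕ, ∑ p ∈ Finset.HasAntidiagonal.antidiagonal n, f p =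
      poch γ n / (Nat.factorial n) * calP ρ α β δ κ n x * t ^ n := by
    intro n
    rw [Finset.Nat.sum_antidiagonal_eq_sum_range_succ_mk]
    have hcal : calP ρ α β δ κ n x = ∑ k ∈ Finset.range (n+1),
        (poch (-(n:ℂ)) k * poch ((n:ℂ) + α + β + 1) k * (∏ i, poch ((δ i:ℂ)+1) k) /
          (poch ((α:ℂ)+1) k * ∏ i, poch ((κ i:ℂ)+(δ i:ℂ)+1) k) * x ^ k /
          (Nat.factorial k)) := by
      refine tsum_eq_sum ?_
      intro k hk
      have hkn : n < k := by simpa using hk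
      rw [poch_neg_nat, Nat.descFactorial_eq_zero_iff_lt.mpr hkn]
      simp
    rw [hcal, Finset.mul_sum, Finset.sum_mul]
    refine Finset.sum_congr rfl fun k hk => ?_
    have hkn : k ≤ n := by simpa [Nat.lt_succ_iff] using hk
    rw [hfdef]
    simp only
    rw [show n - k + 2*k = n + k from by omega, show n - k + k = n from by omega,
      poch_add γ n k, poch_neg_nat,
      show ((n:ℂ) + α + β + 1) = γ + (n:ℂ) by rw [hγdef]; ring]
    have hF2 : (((n-k).factorial : ℂ)) ≠ 0 := Nat.cast_ne_zero.mpr (n-k).factorial_ne_zero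
    have hF1 : ((n.factorial : ℂ)) ≠ 0 := Nat.cast_ne_zero.mpr n.factorial_ne_zero
    have hkf : ((k.factorial : ℂ)) ≠ 0 := Nat.cast_ne_zero.mpr k.factorial_ne_zero
    have hfac : (((n-k).factorial : ℕ) : ℂ) * ((n.descFactorial k : ℕ) : ℂ)
        = ((n.factorial : ℕ) : ℂ) := by
      exact_mod_cast congrArg (Nat.cast : ℕ → ℂ) (Nat.factorial_mul_descFactorial hkn)
    have hsc : poch γ n / ((n.factorial : ℕ) : ℂ) *
        ((-1)^k * ((n.descFactorial k : ℕ) : ℂ) * poch (γ + (n:ℂ)) k) =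
        (-1)^k * (poch γ n * poch (γ + (n:ℂ)) k) / (((n-k).factorial : ℕ) : ℂ) := by
      rw [div_mul_eq_mul_div, div_eq_div_iff hF1 hF2]
      linear_combination ((-1 : ℂ)^k * poch γ n * poch (γ + (n:ℂ)) k) * hfac
    rw [AA]
    linear_combination (-((∏ i, poch ((δ i:ℂ)+1) k) /
        (poch ((α:ℂ)+1) k * ∏ i, poch ((κ i:ℂ)+(δ i:ℂ)+1) k) * x ^ k /
        ((k.factorial : ℕ) : ℂ) * t ^ n)) * hsc
  have hfinal : (fun n : ℕ => ∑ p ∈ Finset.HasAntidiagonal.antidiagonal n, f p) =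
      (fun n : ℕ => poch γ n / (Nat.factorial n) * calP ρ α β δ κ n x * t ^ n) :=
    funext hrow_eq
  rw [hfinal] at hN
  rw [show (-(α:ℂ) - β - 1) = -γ by rw [hγdef]; ring, ← hSval]
  exact hN
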